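/- Let Σ_o, Σ_uc ⊆ Σ with Σ − Σ_o ⊆ Σ_uc (every unobservable event is uncontrollable, as when Σ_c ⊆ Σ_o). Let M_O = (U, Σ_o, η, u0) be a deterministic automaton over Σ_o with O = L(M_O), and define S^↓ = (U, Σ, η^S, u0) by: η^S(u, σ) = η(u, σ) for σ ∈ Σ_o when defined; η^S(u, σ) = u for σ ∈ Σ_uc ∩ (Σ − Σ_o); and η^S(u, σ) = u_⊥ for σ ∈ Σ_uc ∩ Σ_o with η(u, σ) undefined, where u_⊥ ∈ U is a state at which η(u_⊥, σ) = u_⊥ is additionally defined for all σ ∈ Σ_uc ∩ Σ_o. Then L(S^↓) = P_{Σ_o}^{-1}( O · (Σ_uc ∩ Σ_o)^* ). -/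

import Mathlib

open List

variable {α : Type*}

/-- Strings over a sub-alphabet `S`. -/
def Strings (S : Set α) : Set (List α) := {w | ∀ a ∈ w, a ∈ S}

/-- Natural projection onto the sub-alphabet `S`: erase letters outside `S`. -/
def proj (S : Set α) [DecidablePred (· ∈ S)] (w : List α) : List α :=
  w.filter (fun a => decide (a ∈ S))

/-- Kleene star over the alphabet `K`. -/
def kstar (K : Set α) : Set (List α) := {t | ∀ a ∈ t, a ∈ K}

/-- Concatenation of two languages. -/
def cat (A B : Set (List α)) : Set (List α) := {u | ∃ s ∈ A, ∃ t ∈ B, u = s ++ t}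

/-- A language is prefix-closed if it contains all prefixes of its members. -/
def PrefixClosed (L : Set (List α)) : Prop := ∀ s ∈ L, ∀ t, t <+: s → t ∈ L


/-- A partial deterministic automaton with state type `Q` over event type `α`. -/
structure PDA (Q α : Type*) where
  δ : Q → α → Option Q
  init : Q

variable {Q Q₁ Q₂ Q₃ : Type*}

/-- Extension of a partial transition function to strings. -/
def runFrom (δ : Q → α → Option Q) : Q → List α → Option Q
  | q, [] => some q
  | q, a :: s => (δ q a).bind fun q' => runFrom δ q' s

/-- Closed behavior: the strings executable from the initial state. -/
def lang (M : PDA Q α) : Set (List α) := {s | (runFrom M.δ M.init s).isSome}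

/-- Marked behavior with respect to a set `F` of marked states. -/
def marked (M : PDA Q α) (F : Set Q) : Set (List α) :=
  {s | ∃ q ∈ F, runFrom M.δ M.init s = some q}

variable {U : Type*}

/-- The transition function of the supervisor `S^↓` built from the observation
automaton `M_O = (U, Σ_o, η, u0)`: follow `η` on observable events, self-loop on
unobservable (hence uncontrollable) events, and redirect undefined uncontrollable
observable events to the state `u_⊥`. -/
def etaS (So Suc : Set α) [DecidablePred (· ∈ So)] [DecidablePred (· ∈ Suc)]
    (η : U → α → Option U) (ubot : U) : U → α → Option U := fun u a =>
  if a ∈ So then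
    match η u a with
    | some v => some v
    | none => if a ∈ Suc then some ubot else none
  else if a ∈ Suc then some u else none

lemma key_Sdown (So Suc : Set α) [DecidablePred (· ∈ So)] [DecidablePred (· ∈ Suc)]
    (η : U → α → Option U) (ubot : U)
    (hsub : ∀ a : α, a ∉ So → a ∈ Suc)
    (hbot : ∀ a : α, η ubot a = none) :
    ∀ (s : List α) (u : U),
      (runFrom (etaS So Suc η ubot) u s).isSome ↔
        ∃ w t, proj So s = w ++ t ∧ (runFrom η u w).isSome ∧ t ∈ kstar (Suc ∩ So) := by
  intro s
  induction s with
  | nil =>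
      intro u
      constructor
      · intro _
        exact ⟨[], [], by simp [proj], by simp [runFrom], fun a h => absurd h List.not_mem_nil⟩
      · intro _
        simp [runFrom]
  | cons a s ih =>
      intro u
      by_cases hSo : a ∈ So
      · have hproj : proj So (a :: s) = a :: proj So s := by
          simp [proj, List.filter, hSo]
        cases hηa : η u a with
        | some v =>
            have hf : etaS So Suc η ubot u a = some v := by
              simp [etaS, hSo, hηa]
            constructor
            · intro h
              have h' : (runFrom (etaS So Suc η ubot) v s).isSome := by
                simpa [runFrom, hf] using h
              obtain ⟨w, t, hwt, hw, ht⟩ := (ih v).1 h'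
              exact ⟨a :: w, t, by simp [hproj, hwt],
                by simpa [runFrom, hηa] using hw, ht⟩
            · rintro ⟨w, t, hwt, hw, ht⟩
              rw [hproj] at hwt
              have h' : (runFrom (etaS So Suc η ubot) v s).isSome := by
                apply (ih v).2
                cases w with
                | nil =>
                    simp at hwt
                    refine ⟨[], proj So s, by simp, by simp [runFrom], ?_⟩
                    intro b hb
                    exact ht b (hwt ▸ List.mem_cons_of_mem a hb)
                | cons b w' =>
                    simp at hwt
                    obtain ⟨hab, hwt'⟩ := hwt
                    subst hab
                    refine ⟨w', t, hwt', ?_, ht⟩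
                    simpa [runFrom, hηa] using hw
              simpa [runFrom, hf] using h'
        | none =>
            by_cases hSuc : a ∈ Suc
            · have hf : etaS So Suc η ubot u a = some ubot := by
                simp [etaS, hSo, hηa, hSuc]
              have hbotrun : ∀ w : List α, (runFrom η ubot w).isSome → w = [] := by
                intro w hw
                cases w with
                | nil => rfl
                | cons b w' => simp [runFrom, hbot] at hw
              constructor
              · intro h
                have h' : (runFrom (etaS So Suc η ubot) ubot s).isSome := by
                  simpa [runFrom, hf] using h
                obtain ⟨w, t, hwt, hw, ht⟩ := (ih ubot).1 h'
                have hw0 : w = [] := hbotrun w hw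
                subst hw0
                simp at hwt
                refine ⟨[], a :: proj So s, by simp [hproj], by simp [runFrom], ?_⟩
                intro b hb
                rcases List.mem_cons.1 hb with hb | hb
                · subst hb; exact ⟨hSuc, hSo⟩
                · exact ht b (hwt ▸ hb)
              · rintro ⟨w, t, hwt, hw, ht⟩
                rw [hproj] at hwt
                cases w with
                | nil =>
                    simp at hwt
                    have h' : (runFrom (etaS So Suc η ubot) ubot s).isSome := by
                      apply (ih ubot).2
                      refine ⟨[], proj So s, by simp, by simp [runFrom], ?_⟩
                      intro b hb
                      exact ht b (hwt ▸ List.mem_cons_of_mem a hb)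
                    simpa [runFrom, hf] using h'
                | cons b w' =>
                    simp at hwt
                    obtain ⟨hab, _⟩ := hwt
                    subst hab
                    simp [runFrom, hηa] at hw
            · have hf : etaS So Suc η ubot u a = none := by
                simp [etaS, hSo, hηa, hSuc]
              constructor
              · intro h
                simp [runFrom, hf] at h
              · rintro ⟨w, t, hwt, hw, ht⟩
                rw [hproj] at hwt
                cases w with
                | nil =>
                    simp at hwt
                    have : a ∈ Suc ∩ So := ht a (hwt ▸ (List.mem_cons_self : a ∈ a :: proj So s))
                    exact absurd this.1 hSuc
                | cons b w' =>
                    simp at hwt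
                    obtain ⟨hab, _⟩ := hwt
                    subst hab
                    simp [runFrom, hηa] at hw
      · have hSuc : a ∈ Suc := hsub a hSo
        have hproj : proj So (a :: s) = proj So s := by
          simp [proj, List.filter, hSo]
        have hf : etaS So Suc η ubot u a = some u := by
          simp [etaS, hSo, hSuc]
        constructor
        · intro h
          have h' : (runFrom (etaS So Suc η ubot) u s).isSome := by
            simpa [runFrom, hf] using h
          obtain ⟨w, t, hwt, hw, ht⟩ := (ih u).1 h'
          exact ⟨w, t, by rw [hproj]; exact hwt, hw, ht⟩
        · rintro ⟨w, t, hwt, hw, ht⟩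
          rw [hproj] at hwt
          have h' := (ih u).2 ⟨w, t, hwt, hw, ht⟩
          simpa [runFrom, hf] using h'

/-- if every unobservable event is uncontrollable, `M_O` is an
automaton over `Σ_o` with `u_⊥` deadlocked, then
`L(S^↓) = P_{Σ_o}⁻¹( O · (Σ_uc ∩ Σ_o)^* )` where `O = L(M_O)`. -/
theorem lang_Sdown (So Suc : Set α) [DecidablePred (· ∈ So)] [DecidablePred (· ∈ Suc)]
    (η : U → α → Option U) (u0 ubot : U)
    (hsub : ∀ a : α, a ∉ So → a ∈ Suc)
    (halpha : ∀ u a x, η u a = some x → a ∈ So)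
    (hbot : ∀ a : α, η ubot a = none) :
    {s : List α | (runFrom (etaS So Suc η ubot) u0 s).isSome}
      = proj So ⁻¹' (cat {w : List α | (runFrom η u0 w).isSome}
          (kstar (Suc ∩ So))) := by
  ext s
  rw [Set.mem_preimage]
  constructor
  · intro h
    obtain ⟨w, t, hwt, hw, ht⟩ := (key_Sdown So Suc η ubot hsub hbot s u0).1 h
    exact ⟨w, hw, t, ht, hwt⟩
  · rintro ⟨w, hw, t, ht, hwt⟩
    exact (key_Sdown So Suc η ubot hsub hbot s u0).2 ⟨w, t, hwt, hw, ht⟩
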